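/- Let P_n(x,y) = −(n x² + (1/n) y²) and f : ℝ² → ℝ, f(x,y) = sup_n P_n(x,y). Then: (i) f is 2-homogeneous and −|(x,y)|² ≤ f(x,y) ≤ min{−x², −2|xy|}; (ii) Df(0,0) = (0,0); (iii) P_n ∈ ∂² f(0,0) for every n; and (iv) every 2-homogeneous polynomial P ∈ ∂² f(0,0) satisfies sup_{|v|=1} P(v) < 0. Consequently sup{P(v) : |v| = 1, P ∈ ∂² f(0,0)} = 0 while each individual P ∈ ∂² f(0,0) is negative definite. -/

import Mathlib

open Filter Topology Finset

noncomputable section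

/-- ℝ^N with the Euclidean norm. -/
abbrev Euc (N : ℕ) := EuclideanSpace ℝ (Fin N)

/-- `P : ℝ^N → F` is a `k`-homogeneous polynomial, i.e. the restriction to the diagonal
of a continuous `k`-multilinear map. -/
def IsHomogPoly {N : ℕ} {F : Type*} [NormedAddCommGroup F] [NormedSpace ℝ F]
    (k : ℕ) (P : Euc N → F) : Prop :=
  ∃ M : ContinuousMultilinearMap ℝ (fun _ : Fin k => Euc N) F, ∀ v, P v = M (fun _ => v)

/-- `Pₙ(x,y) = -(n x² + y²/n)` for `n ≥ 1` (indexed here by `n+1`, `n : ℕ`). -/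
def Pex (n : ℕ) (v : Euc 2) : ℝ := -(((n : ℝ) + 1) * (v 0) ^ 2 + (v 1) ^ 2 / ((n : ℝ) + 1))

/-- `f(x,y) = supₙ Pₙ(x,y)`. -/
def fex (v : Euc 2) : ℝ := ⨆ n : ℕ, Pex n v

/-- `P ∈ ∂² fex(0̄)`: the liminf condition (note `fex 0̄ = 0` and `D fex(0̄) = 0`). -/
def MemSub2 (P : Euc 2 → ℝ) : Prop :=
  ∀ ε > (0 : ℝ), ∀ᶠ h in 𝓝[≠] (0 : Euc 2), -ε ≤ (fex h - fex 0 - P h) / ‖h‖ ^ 2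

lemma normsq (v : Euc 2) : ‖v‖ ^ 2 = (v 0) ^ 2 + (v 1) ^ 2 := by
  rw [EuclideanSpace.norm_eq, Real.sq_sqrt (by positivity)]
  simp [Fin.sum_univ_two, sq_abs]

lemma pex_nonpos (n : ℕ) (v : Euc 2) : Pex n v ≤ 0 := by
  have h : (0:ℝ) < (n:ℝ) + 1 := by positivity
  have hB : (0:ℝ) ≤ (v 1) ^ 2 / ((n:ℝ) + 1) := by positivity
  unfold Pex
  nlinarith [sq_nonneg (v 0)]

lemma pex_bdd (v : Euc 2) : BddAbove (Set.range fun n => Pex n v) :=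
  ⟨0, by rintro r ⟨n, rfl⟩; exact pex_nonpos n v⟩

lemma pex_le_fex (n : ℕ) (v : Euc 2) : Pex n v ≤ fex v := le_ciSup (pex_bdd v) n

lemma fex_nonpos (v : Euc 2) : fex v ≤ 0 := ciSup_le fun n => pex_nonpos n v

lemma fex_le1 (v : Euc 2) : fex v ≤ -(v 0) ^ 2 := by
  refine ciSup_le fun n => ?_
  have h : (0:ℝ) < (n:ℝ) + 1 := by positivity
  have hB : (0:ℝ) ≤ (v 1) ^ 2 / ((n:ℝ) + 1) := by positivity
  have hn : (1:ℝ) ≤ (n:ℝ) + 1 := by linarith [Nat.cast_nonneg (α:=ℝ) n]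
  unfold Pex
  nlinarith [mul_le_mul_of_nonneg_right hn (sq_nonneg (v 0))]

lemma fex_le2 (v : Euc 2) : fex v ≤ -(2 * |v 0 * v 1|) := by
  refine ciSup_le fun n => ?_
  have h : (0:ℝ) < (n:ℝ) + 1 := by positivity
  have h2 : |v 0 * v 1| = |v 0| * |v 1| := abs_mul _ _
  unfold Pex
  rw [h2, neg_le_neg_iff]
  have heq : ((n:ℝ)+1) * (v 0)^2 + (v 1)^2 / ((n:ℝ)+1)
      = (((n:ℝ)+1) * (((n:ℝ)+1) * (v 0)^2) + (v 1)^2) / ((n:ℝ)+1) := by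
    field_simp
  rw [heq, le_div_iff₀ h]
  have key : 0 ≤ ((n:ℝ)+1)^2 * (v 0)^2 - 2*(((n:ℝ)+1)*(|v 0| * |v 1|)) + (v 1)^2 := by
    nlinarith [sq_nonneg (((n:ℝ)+1) * |v 0| - |v 1|), sq_abs (v 0), sq_abs (v 1)]
  nlinarith [key]

lemma neg_normsq_le_fex (v : Euc 2) : -‖v‖ ^ 2 ≤ fex v := by
  have := pex_le_fex 0 v
  unfold Pex at this
  rw [normsq]
  push_cast at this
  linarith

lemma fex_zero : fex 0 = 0 := by
  have h : ∀ n : ℕ, Pex n (0 : Euc 2) = 0 := by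
    intro n
    have h0 : (0 : Euc 2) 0 = 0 := rfl
    have h1 : (0 : Euc 2) 1 = 0 := rfl
    simp [Pex, h0, h1]
  simp [fex, h]

lemma pex_smul (n : ℕ) (t : ℝ) (v : Euc 2) : Pex n (t • v) = t ^ 2 * Pex n v := by
  have h0 : (t • v) 0 = t * v 0 := rfl
  have h1 : (t • v) 1 = t * v 1 := rfl
  unfold Pex
  rw [h0, h1]
  field_simp

lemma fex_smul (t : ℝ) (ht : 0 ≤ t) (v : Euc 2) : fex (t • v) = t ^ 2 * fex v := by
  unfold fex
  rw [Real.mul_iSup_of_nonneg (by positivity)]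
  exact iSup_congr fun n => pex_smul n t v

lemma abs_fex_le (v : Euc 2) : |fex v| ≤ ‖v‖ ^ 2 :=
  abs_le.2 ⟨by linarith [neg_normsq_le_fex v], le_trans (fex_nonpos v) (by positivity)⟩

lemma fderiv_part : HasFDerivAt fex (0 : Euc 2 →L[ℝ] ℝ) 0 := by
  rw [hasFDerivAt_iff_isLittleO_nhds_zero]
  rw [Asymptotics.isLittleO_iff]
  intro c hc
  filter_upwards [Metric.ball_mem_nhds (0 : Euc 2) hc] with h hh
  rw [mem_ball_zero_iff] at hh
  simp only [zero_add, fex_zero, ContinuousLinearMap.zero_apply, sub_zero]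
  have h1 := abs_fex_le h
  have h2 : ‖h‖ ^ 2 ≤ c * ‖h‖ := by nlinarith [norm_nonneg h]
  calc ‖fex h‖ = |fex h| := rfl
    _ ≤ ‖h‖ ^ 2 := h1
    _ ≤ c * ‖h‖ := h2

lemma memsub2_pex (n : ℕ) : MemSub2 (Pex n) := by
  intro ε hε
  filter_upwards [self_mem_nhdsWithin] with h hh
  have hne : h ≠ 0 := hh
  have hpos : (0:ℝ) < ‖h‖ ^ 2 := pow_pos (norm_pos_iff.2 hne) 2
  have : 0 ≤ (fex h - fex 0 - Pex n h) / ‖h‖ ^ 2 := by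
    apply div_nonneg _ hpos.le
    rw [fex_zero]
    linarith [pex_le_fex n h]
  linarith

lemma homog_smul {P : Euc 2 → ℝ} (hH : IsHomogPoly 2 P) (t : ℝ) (v : Euc 2) :
    P (t • v) = t ^ 2 * P v := by
  obtain ⟨M, hM⟩ := hH
  rw [hM, hM]
  have h := M.map_smul_univ (fun _ : Fin 2 => t) (fun _ => v)
  simp only [Fin.prod_univ_two, smul_eq_mul] at h
  rw [show (fun _ : Fin 2 => t • v) = (fun i : Fin 2 => (fun _ : Fin 2 => t) i • (fun _ : Fin 2 => v) i) from rfl, h]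
  ring

lemma memsub2_le_fex {P : Euc 2 → ℝ} (hH : IsHomogPoly 2 P) (hS : MemSub2 P)
    {v : Euc 2} (hv : v ≠ 0) : P v ≤ fex v := by
  have hv' : (0:ℝ) < ‖v‖ := norm_pos_iff.2 hv
  have key : ∀ ε > (0:ℝ), -ε ≤ (fex v - P v) / ‖v‖ ^ 2 := by
    intro ε hε
    have hev := hS ε hε
    have ht : Filter.Tendsto (fun t : ℝ => t • v) (𝓝[>] (0:ℝ)) (𝓝[≠] (0 : Euc 2)) := by
      rw [tendsto_nhdsWithin_iff]
      constructor
      · have hc : Filter.Tendsto (fun t : ℝ => t • v) (𝓝 (0:ℝ)) (𝓝 (0 : Euc 2)) := by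
          exact (continuous_id.smul (continuous_const (y := v))).tendsto' (0:ℝ) 0 (by simp)
        exact hc.mono_left nhdsWithin_le_nhds
      · filter_upwards [self_mem_nhdsWithin] with t htpos
        exact smul_ne_zero (ne_of_gt htpos) hv
    obtain ⟨t, h1, h2⟩ := ((ht.eventually hev).and self_mem_nhdsWithin).exists
    have htpos : (0:ℝ) < t := h2
    rw [fex_zero, fex_smul t htpos.le, homog_smul hH, norm_smul] at h1
    have hrw : (t ^ 2 * fex v - 0 - t ^ 2 * P v) / (‖t‖ * ‖v‖) ^ 2
        = (fex v - P v) / ‖v‖ ^ 2 := by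
      rw [Real.norm_eq_abs, abs_of_pos htpos]
      field_simp
      ring
    rwa [hrw] at h1
  have h0 : 0 ≤ (fex v - P v) / ‖v‖ ^ 2 := by
    set a := (fex v - P v) / ‖v‖ ^ 2 with ha
    by_contra hcon
    push_neg at hcon
    have := key (-a / 2) (by linarith)
    linarith
  have := (le_div_iff₀ (by positivity : (0:ℝ) < ‖v‖ ^ 2)).mp h0
  linarith [this]

def Qij (i j : Fin 2) : ContinuousMultilinearMap ℝ (fun _ : Fin 2 => Euc 2) ℝ :=
  (ContinuousMultilinearMap.mkPiAlgebraFin ℝ 2 ℝ).compContinuousLinearMap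
    ![EuclideanSpace.proj i, EuclideanSpace.proj j]

lemma Qij_apply (i j : Fin 2) (v : Euc 2) : Qij i j (fun _ => v) = v i * v j := by
  simp [Qij, ContinuousMultilinearMap.compContinuousLinearMap_apply,
    ContinuousMultilinearMap.mkPiAlgebraFin_apply, List.ofFn_succ]

lemma pex_isHomog (n : ℕ) : IsHomogPoly 2 (Pex n) := by
  refine ⟨-((((n:ℝ)+1)) • Qij 0 0 + (1/((n:ℝ)+1)) • Qij 1 1), fun v => ?_⟩
  simp only [ContinuousMultilinearMap.neg_apply, ContinuousMultilinearMap.add_apply,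
    ContinuousMultilinearMap.smul_apply, Qij_apply, smul_eq_mul]
  unfold Pex
  field_simp

lemma upd0 {α : Type*} (a b x : α) : Function.update ![a, b] 0 x = ![x, b] := by
  funext i
  fin_cases i <;> simp [Function.update]

lemma upd1 {α : Type*} (a b x : α) : Function.update ![a, b] 1 x = ![a, x] := by
  funext i
  fin_cases i <;> simp [Function.update]

lemma diag_eq (v : Euc 2) : (fun _ : Fin 2 => v) = ![v, v] := by
  funext i; fin_cases i <;> rfl

section NegDef

variable (M : ContinuousMultilinearMap ℝ (fun _ : Fin 2 => Euc 2) ℝ)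

lemma Mb_add_left (a b w : Euc 2) : M ![a + b, w] = M ![a, w] + M ![b, w] := by
  have h := M.map_update_add ![a, w] 0 a b
  rwa [upd0, upd0, upd0] at h

lemma Mb_add_right (a b w : Euc 2) : M ![w, a + b] = M ![w, a] + M ![w, b] := by
  have h := M.map_update_add ![w, a] 1 a b
  rwa [upd1, upd1, upd1] at h

lemma Mb_smul_left (x : ℝ) (a w : Euc 2) : M ![x • a, w] = x * M ![a, w] := by
  have h := M.map_update_smul ![a, w] 0 x a
  rwa [upd0, upd0, smul_eq_mul] at h

lemma Mb_smul_right (x : ℝ) (a w : Euc 2) : M ![w, x • a] = x * M ![w, a] := by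
  have h := M.map_update_smul ![w, a] 1 x a
  rwa [upd1, upd1, smul_eq_mul] at h

lemma Mb_quad (x : ℝ) (a b : Euc 2) :
    M (fun _ => x • a + b)
      = x ^ 2 * M ![a, a] + x * (M ![a, b] + M ![b, a]) + M ![b, b] := by
  rw [diag_eq, Mb_add_left, Mb_add_right, Mb_add_right, Mb_smul_left,
    Mb_smul_right, Mb_smul_right, Mb_smul_left]
  ring

end NegDef

def ee0 : Euc 2 := EuclideanSpace.single 0 1
def ee1 : Euc 2 := EuclideanSpace.single 1 1

lemma ee0_apply : ee0 0 = 1 ∧ ee0 1 = 0 := by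
  constructor <;> simp [ee0, EuclideanSpace.single_apply]

lemma ee1_apply : ee1 0 = 0 ∧ ee1 1 = 1 := by
  constructor <;> simp [ee1, EuclideanSpace.single_apply]

lemma norm_ee1 : ‖ee1‖ = 1 := by simp [ee1, EuclideanSpace.norm_single]

lemma vvx_apply (x : ℝ) : (x • ee0 + ee1) 0 = x ∧ (x • ee0 + ee1) 1 = 1 := by
  have h0 : (x • ee0 + ee1) 0 = x * ee0 0 + ee1 0 := rfl
  have h1 : (x • ee0 + ee1) 1 = x * ee0 1 + ee1 1 := rfl
  rw [h0, h1, ee0_apply.1, ee0_apply.2, ee1_apply.1, ee1_apply.2]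
  constructor <;> ring

lemma negdef {P : Euc 2 → ℝ} (hH : IsHomogPoly 2 P) (hS : MemSub2 P) :
    ∀ v : Euc 2, ‖v‖ = 1 → P v < 0 := by
  obtain ⟨M, hM⟩ := hH
  have hH' : IsHomogPoly 2 P := ⟨M, hM⟩
  -- the key inequality along (x, 1)
  have hkey : ∀ x : ℝ,
      x ^ 2 * M ![ee0, ee0] + x * (M ![ee0, ee1] + M ![ee1, ee0]) + M ![ee1, ee1]
        ≤ -(2 * |x|) := by
    intro x
    have hvne : x • ee0 + ee1 ≠ 0 := by
      intro hcon
      have := (vvx_apply x).2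
      rw [hcon] at this
      exact one_ne_zero (by rw [← this]; rfl)
    have h1 := memsub2_le_fex hH' hS hvne
    have h2 := fex_le2 (x • ee0 + ee1)
    rw [(vvx_apply x).1, (vvx_apply x).2, mul_one] at h2
    rw [hM, Mb_quad] at h1
    linarith
  -- C < 0
  set A := M ![ee0, ee0] with hA
  set C := M ![ee1, ee1] with hC
  have hCneg : C < 0 := by
    by_contra hcon
    push_neg at hcon
    set t : ℝ := 1 / (|A| + 1) with hts
    have hApos : (0:ℝ) < |A| + 1 := by positivity
    have ht0 : (0:ℝ) < t := by positivity
    have h1 := hkey t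
    have h2 := hkey (-t)
    rw [abs_of_pos ht0] at h1
    rw [abs_neg, abs_of_pos ht0, neg_pow, neg_mul] at h2
    have hsum : t ^ 2 * A + C ≤ -(2 * t) := by ring_nf at h1 h2 ⊢; linarith
    have h3 : t * |A| ≤ 1 := by
      rw [hts]
      rw [div_mul_eq_mul_div, div_le_one hApos]
      linarith [abs_nonneg A]
    have h4 : t ^ 2 * (-|A|) ≤ t ^ 2 * A :=
      mul_le_mul_of_nonneg_left (neg_abs_le A) (by positivity)
    have h5 : t * (t * |A|) ≤ t * 1 := mul_le_mul_of_nonneg_left h3 ht0.le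
    nlinarith
  intro v hv
  by_cases hv0 : v 0 = 0
  · -- v = (v 1) • ee1 with (v 1)^2 = 1
    set s := v 1 with hs
    have hveq : v = s • ee1 := by
      apply PiLp.ext
      intro i
      fin_cases i
      · show v 0 = s * ee1 0
        rw [hv0, ee1_apply.1]; ring
      · show v 1 = s * ee1 1
        rw [ee1_apply.2, hs]; ring
    have hv1 : s ^ 2 = 1 := by
      have := normsq v
      rw [hv, hv0, ← hs] at this
      nlinarith
    have : P v = s ^ 2 * C := by
      rw [hveq, hM, diag_eq, Mb_smul_left, Mb_smul_right, hC]
      ring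
    rw [this, hv1, one_mul]
    exact hCneg
  · have hvne : v ≠ 0 := fun h => hv0 (by rw [h]; rfl)
    have h1 := memsub2_le_fex hH' hS hvne
    have h2 := fex_le1 v
    have : (0:ℝ) < (v 0) ^ 2 := by positivity
    linarith

lemma sup_sphere_neg {P : Euc 2 → ℝ} (hH : IsHomogPoly 2 P) (hS : MemSub2 P) :
    (⨆ v : Metric.sphere (0 : Euc 2) 1, P v) < 0 := by
  obtain ⟨M, hM⟩ := hH
  have hcont : Continuous P := by
    have hPe : P = fun v => M (fun _ => v) := funext hM
    rw [hPe]
    exact M.cont.comp (continuous_pi fun _ => continuous_id)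
  have hmem : (ee1 : Euc 2) ∈ Metric.sphere (0 : Euc 2) 1 :=
    mem_sphere_zero_iff_norm.2 norm_ee1
  obtain ⟨v0, hv0mem, hmax⟩ := (isCompact_sphere (0 : Euc 2) 1).exists_isMaxOn
    ⟨ee1, hmem⟩ hcont.continuousOn
  have : Nonempty (Metric.sphere (0 : Euc 2) 1) := ⟨⟨ee1, hmem⟩⟩
  have hle : (⨆ v : Metric.sphere (0 : Euc 2) 1, P v) ≤ P v0 :=
    ciSup_le fun v => hmax v.2
  exact lt_of_le_of_lt hle (negdef ⟨M, hM⟩ hS v0 (mem_sphere_zero_iff_norm.1 hv0mem))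

lemma sSup_part :
    sSup {r : ℝ | ∃ P : Euc 2 → ℝ, IsHomogPoly 2 P ∧ MemSub2 P ∧
      ∃ v : Euc 2, ‖v‖ = 1 ∧ r = P v} = 0 := by
  set S := {r : ℝ | ∃ P : Euc 2 → ℝ, IsHomogPoly 2 P ∧ MemSub2 P ∧
      ∃ v : Euc 2, ‖v‖ = 1 ∧ r = P v} with hSdef
  have hub : ∀ r ∈ S, r ≤ 0 := by
    rintro r ⟨P, hH, hS, v, hv, rfl⟩
    have hvne : v ≠ 0 := by
      intro h; rw [h] at hv; simp at hv
    have h1 := memsub2_le_fex hH hS hvne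
    have h2 := fex_le1 v
    nlinarith [sq_nonneg (v 0)]
  have hmem : ∀ n : ℕ, -(1 / ((n:ℝ) + 1)) ∈ S := by
    intro n
    refine ⟨Pex n, pex_isHomog n, memsub2_pex n, ee1, norm_ee1, ?_⟩
    unfold Pex
    rw [ee1_apply.1, ee1_apply.2]
    norm_num
  have hbdd : BddAbove S := ⟨0, fun r hr => hub r hr⟩
  have hne : S.Nonempty := ⟨_, hmem 0⟩
  refine le_antisymm (csSup_le hne hub) ?_
  by_contra hcon
  push_neg at hcon
  obtain ⟨n, hn⟩ := exists_nat_one_div_lt (show (0:ℝ) < -(sSup S) by linarith)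
  have := le_csSup hbdd (hmem n)
  linarith

/-- The function `f(x,y) = supₙ -(n x² + y²/n)` is 2-homogeneous, satisfies
`-|(x,y)|² ≤ f(x,y) ≤ min{-x², -2|xy|}`, has `Df(0̄) = 0̄`, each `Pₙ ∈ ∂² f(0̄)`, every
`P ∈ ∂² f(0̄)` satisfies `sup_{|v|=1} P(v) < 0`, and nevertheless
`sup {P(v) : |v| = 1, P ∈ ∂² f(0̄)} = 0`. -/
theorem fex_properties :
    (∀ t : ℝ, 0 ≤ t → ∀ v : Euc 2, fex (t • v) = t ^ 2 * fex v) ∧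
    (∀ v : Euc 2, -‖v‖ ^ 2 ≤ fex v ∧ fex v ≤ min (-(v 0) ^ 2) (-(2 * |v 0 * v 1|))) ∧
    HasFDerivAt fex (0 : Euc 2 →L[ℝ] ℝ) 0 ∧
    (∀ n : ℕ, MemSub2 (Pex n)) ∧
    (∀ P : Euc 2 → ℝ, IsHomogPoly 2 P → MemSub2 P →
      (⨆ v : Metric.sphere (0 : Euc 2) 1, P v) < 0) ∧
    sSup {r : ℝ | ∃ P : Euc 2 → ℝ, IsHomogPoly 2 P ∧ MemSub2 P ∧
      ∃ v : Euc 2, ‖v‖ = 1 ∧ r = P v} = 0 :=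
  ⟨fun t ht v => fex_smul t ht v,
    fun v => ⟨neg_normsq_le_fex v, le_min (fex_le1 v) (fex_le2 v)⟩,
    fderiv_part,
    memsub2_pex,
    fun _ hH hS => sup_sphere_neg hH hS,
    sSup_part⟩
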